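/- Let (X, ℬ) be a measurable space and κ a sub-Markov transition kernel on X. Let 𝒢 denote the set of all conservative reversible probability measures for κ and ℐ the set of all invariant probability measures for κ. Then every extreme element of 𝒢 is an extreme element of ℐ. -/

import Mathlib

open MeasureTheory ProbabilityTheory

variable {X : Type*} [MeasurableSpace X]

/-- A function is bounded measurable. -/
def BddMeasurable {X : Type*} [MeasurableSpace X] (f : X → ℝ) : Prop :=
  Measurable f ∧ ∃ C : ℝ, ∀ x, |f x| ≤ C

/-- The transition operator `T f (x) = ∫ f(y) κ(x, dy)`. -/
noncomputable def Tker {X : Type*} [MeasurableSpace X] (κ : Kernel X X) (f : X → ℝ) :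
    X → ℝ :=
  fun x => ∫ y, f y ∂(κ x)

/-- `m` is an invariant measure: `∫ T f dm = ∫ f dm` for all bounded measurable `f`. -/
def IsInvariantMeas {X : Type*} [MeasurableSpace X] (κ : Kernel X X) (m : Measure X) : Prop :=
  ∀ f : X → ℝ, BddMeasurable f → ∫ x, Tker κ f x ∂m = ∫ x, f x ∂m

/-- `m` is a reversible measure: `∫ (T f) g dm = ∫ f (T g) dm`
for all bounded measurable `f, g`. -/
def IsReversibleMeas {X : Type*} [MeasurableSpace X] (κ : Kernel X X) (m : Measure X) : Prop :=
  ∀ f g : X → ℝ, BddMeasurable f → BddMeasurable g →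
    ∫ x, Tker κ f x * g x ∂m = ∫ x, f x * Tker κ g x ∂m

/-- `m` is a conservative measure: `∫ (T 1) g dm = ∫ g dm`
for all bounded measurable `g`, where `T 1 (x) = κ(x, X)`. -/
def IsConservativeMeas {X : Type*} [MeasurableSpace X] (κ : Kernel X X) (m : Measure X) :
    Prop :=
  ∀ g : X → ℝ, BddMeasurable g → ∫ x, (κ x Set.univ).toReal * g x ∂m = ∫ x, g x ∂m

/-- `m` is an extreme element of a set `C` of measures: `m ∈ C` and whenever
`m = (1 - t) • m₀ + t • m₁` with `t ∈ (0,1)` and `m₀, m₁ ∈ C`, one has `m₀ = m₁`. -/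
def IsExtremeElem {X : Type*} [MeasurableSpace X] (C : Set (Measure X)) (m : Measure X) :
    Prop :=
  m ∈ C ∧ ∀ t : ℝ, t ∈ Set.Ioo (0 : ℝ) 1 → ∀ m₀ m₁ : Measure X, m₀ ∈ C → m₁ ∈ C →
    m = ENNReal.ofReal (1 - t) • m₀ + ENNReal.ofReal t • m₁ → m₀ = m₁

lemma BddMeasurable.integrable {f : X → ℝ} (hf : BddMeasurable f) (μ : Measure X)
    [IsFiniteMeasure μ] : Integrable f μ := by
  obtain ⟨hfm, C, hC⟩ := hf
  exact ⟨hfm.aestronglyMeasurable,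
    HasFiniteIntegral.of_bounded (C := C)
      (ae_of_all _ fun x => by simpa [Real.norm_eq_abs] using hC x)⟩

lemma BddMeasurable.mul {f g : X → ℝ} (hf : BddMeasurable f) (hg : BddMeasurable g) :
    BddMeasurable (fun x => f x * g x) := by
  obtain ⟨hfm, C, hC⟩ := hf
  obtain ⟨hgm, D, hD⟩ := hg
  refine ⟨hfm.mul hgm, |C| * |D|, fun x => ?_⟩
  rw [abs_mul]
  exact mul_le_mul ((hC x).trans (le_abs_self C)) ((hD x).trans (le_abs_self D))
    (abs_nonneg _) (abs_nonneg _)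

lemma BddMeasurable.sub {f g : X → ℝ} (hf : BddMeasurable f) (hg : BddMeasurable g) :
    BddMeasurable (fun x => f x - g x) := by
  obtain ⟨hfm, C, hC⟩ := hf
  obtain ⟨hgm, D, hD⟩ := hg
  exact ⟨hfm.sub hgm, C + D, fun x => (abs_sub _ _).trans (add_le_add (hC x) (hD x))⟩

lemma bddMeasurable_const (c : ℝ) : BddMeasurable (fun _ : X => c) :=
  ⟨measurable_const, |c|, fun _ => le_refl |c|⟩

lemma bddMeasurable_T1 (κ : Kernel X X) (hκ : ∀ x, κ x Set.univ ≤ 1) :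
    BddMeasurable (fun x => (κ x Set.univ).toReal) := by
  refine ⟨(κ.measurable_coe MeasurableSet.univ).ennreal_toReal, 1, fun x => ?_⟩
  rw [abs_of_nonneg ENNReal.toReal_nonneg]
  simpa using ENNReal.toReal_mono (by simp) (hκ x)

lemma bddMeasurable_Tker (κ : Kernel X X) [IsFiniteKernel κ] (hκ : ∀ x, κ x Set.univ ≤ 1)
    {f : X → ℝ} (hf : BddMeasurable f) : BddMeasurable (Tker κ f) := by
  obtain ⟨hfm, C, hC⟩ := hf
  constructor
  · have h : StronglyMeasurable (Function.uncurry fun (_ : X) (y : X) => f y) :=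
      hfm.stronglyMeasurable.comp_measurable measurable_snd
    exact (MeasureTheory.StronglyMeasurable.integral_kernel_prod_right (κ := κ) h).measurable
  · refine ⟨|C|, fun x => ?_⟩
    have h1 : ‖∫ y, f y ∂(κ x)‖ ≤ |C| * ((κ x) Set.univ).toReal :=
      norm_integral_le_of_norm_le_const (ae_of_all _ fun y => by
        simpa [Real.norm_eq_abs] using (hC y).trans (le_abs_self C))
    have h2 : ((κ x) Set.univ).toReal ≤ 1 := by
      simpa using ENNReal.toReal_mono (by simp) (hκ x)
    calc |Tker κ f x| ≤ |C| * ((κ x) Set.univ).toReal := h1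
      _ ≤ |C| * 1 := by
          exact mul_le_mul_of_nonneg_left h2 (abs_nonneg C)
      _ = |C| := mul_one _

lemma invariant_of_cons_rev (κ : Kernel X X) [IsFiniteKernel κ]
    (hκ : ∀ x, κ x Set.univ ≤ 1) (m : Measure X) [IsProbabilityMeasure m]
    (hmC : IsConservativeMeas κ m) (hmR : IsReversibleMeas κ m) : IsInvariantMeas κ m := by
  intro f hf
  have h1 : Tker κ (fun _ => (1:ℝ)) = fun x => (κ x Set.univ).toReal := by
    funext x; simp [Tker]; rfl
  calc ∫ x, Tker κ f x ∂m = ∫ x, Tker κ f x * 1 ∂m := by simp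
    _ = ∫ x, f x * Tker κ (fun _ => (1:ℝ)) x ∂m := hmR f _ hf (bddMeasurable_const 1)
    _ = ∫ x, (κ x Set.univ).toReal * f x ∂m := by
        rw [h1]; exact integral_congr_ae (ae_of_all _ fun x => mul_comm _ _)
    _ = ∫ x, f x ∂m := hmC f hf

lemma mem_G_of_invariant (κ : Kernel X X) [IsFiniteKernel κ] (hκ : ∀ x, κ x Set.univ ≤ 1)
    (m μ : Measure X) [IsProbabilityMeasure m] [IsProbabilityMeasure μ]
    (hmC : IsConservativeMeas κ m) (hmR : IsReversibleMeas κ m)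
    (hμI : IsInvariantMeas κ μ) {s : ℝ} (hs : 0 < s)
    (hle : ENNReal.ofReal s • μ ≤ m) :
    IsConservativeMeas κ μ ∧ IsReversibleMeas κ μ := by
  have hmI : IsInvariantMeas κ m := invariant_of_cons_rev κ hκ m hmC hmR
  have hs0 : ENNReal.ofReal s ≠ 0 := (ENNReal.ofReal_pos.mpr hs).ne'
  have hstop : ENNReal.ofReal s ≠ ⊤ := ENNReal.ofReal_ne_top
  -- absolute continuity
  have hac : μ ≪ m := by
    refine Measure.AbsolutelyContinuous.mk fun A hA hA0 => ?_
    have h1 : ENNReal.ofReal s * μ A ≤ m A := by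
      simpa [Measure.smul_apply, smul_eq_mul] using Measure.le_iff'.mp hle A
    rw [hA0, nonpos_iff_eq_zero, mul_eq_zero] at h1
    tauto
  -- T1 = 1 a.e.
  have hT1b := bddMeasurable_T1 κ hκ
  have hT1le : ∀ x, (κ x Set.univ).toReal ≤ 1 := fun x => by
    simpa using ENNReal.toReal_mono (by simp) (hκ x)
  set φ := fun x => 1 - (κ x Set.univ).toReal with hφdef
  have hφb : BddMeasurable φ := (bddMeasurable_const 1).sub hT1b
  have hφ2 : ∫ x, φ x * φ x ∂m = 0 := by
    have h2 : ∫ x, φ x * φ x ∂m = ∫ x, φ x ∂m - ∫ x, (κ x Set.univ).toReal * φ x ∂m := by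
      rw [← integral_sub (hφb.integrable m) ((hT1b.mul hφb).integrable m)]
      exact integral_congr_ae (ae_of_all _ fun x => by simp only [hφdef]; ring)
    rw [h2, hmC φ hφb, sub_self]
  have hT1m : (fun x => (κ x Set.univ).toReal) =ᵐ[m] fun _ => 1 := by
    have := (integral_eq_zero_iff_of_nonneg (fun x => mul_self_nonneg (φ x))
      ((hφb.mul hφb).integrable m)).mp hφ2
    filter_upwards [this] with x hx
    have h3 := mul_self_eq_zero.mp hx
    simp only [hφdef] at h3 ⊢
    linarith
  have hT1μ : (fun x => (κ x Set.univ).toReal) =ᵐ[μ] fun _ => 1 :=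
    hT1m.filter_mono hac.ae_le
  have hcons : IsConservativeMeas κ μ := by
    intro g hg
    refine integral_congr_ae ?_
    filter_upwards [hT1μ] with x hx
    rw [hx, one_mul]
  -- the density H
  set h := μ.rnDeriv m with hhdef
  have hhbd : ∀ᵐ x ∂m, (h x).toReal ≤ s⁻¹ := by
    have h1 := Measure.rnDeriv_smul_left_of_ne_top μ m (r := ENNReal.ofReal s) hstop
    have h2 := Measure.rnDeriv_le_one_of_le hle
    filter_upwards [h1, h2] with x h1x h2x
    rw [h1x, Pi.smul_apply, smul_eq_mul] at h2x
    have hxle : h x ≤ (ENNReal.ofReal s)⁻¹ := by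
      rw [ENNReal.le_inv_iff_mul_le, mul_comm]; exact h2x
    have h4 := ENNReal.toReal_mono (ENNReal.inv_ne_top.mpr hs0) hxle
    rwa [ENNReal.toReal_inv, ENNReal.toReal_ofReal hs.le] at h4
  set H := fun x => min (h x).toReal s⁻¹ with hHdef
  have hHnn : ∀ x, 0 ≤ H x := fun x =>
    le_min ENNReal.toReal_nonneg (by positivity)
  have hHb : BddMeasurable H := by
    refine ⟨((Measure.measurable_rnDeriv μ m).ennreal_toReal).min measurable_const,
      s⁻¹, fun x => abs_le.mpr ⟨?_, min_le_right _ _⟩⟩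
    have := hHnn x
    have : (0:ℝ) ≤ s⁻¹ := by positivity
    linarith [hHnn x]
  have hHae : (fun x => (h x).toReal) =ᵐ[m] H := by
    filter_upwards [hhbd] with x hx
    simp only [hHdef]; rw [min_eq_left hx]
  have hint : ∀ g : X → ℝ, BddMeasurable g → ∫ x, g x ∂μ = ∫ x, H x * g x ∂m := by
    intro g hg
    have h1 := MeasureTheory.integral_rnDeriv_smul hac (f := g)
    rw [← h1]
    refine integral_congr_ae ?_
    filter_upwards [hHae] with x hx
    rw [smul_eq_mul, hx]
  -- T H = H a.e.
  have hTHb := bddMeasurable_Tker κ hκ hHb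
  have hkey1 : ∀ g, BddMeasurable g →
      ∫ x, H x * g x ∂m = ∫ x, Tker κ H x * g x ∂m := by
    intro g hg
    calc ∫ x, H x * g x ∂m = ∫ x, g x ∂μ := (hint g hg).symm
      _ = ∫ x, Tker κ g x ∂μ := (hμI g hg).symm
      _ = ∫ x, H x * Tker κ g x ∂m := hint _ (bddMeasurable_Tker κ hκ hg)
      _ = ∫ x, Tker κ g x * H x ∂m := integral_congr_ae (ae_of_all _ fun x => mul_comm _ _)
      _ = ∫ x, g x * Tker κ H x ∂m := hmR g H hg hHb
      _ = ∫ x, Tker κ H x * g x ∂m := integral_congr_ae (ae_of_all _ fun x => mul_comm _ _)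
  have hTH : Tker κ H =ᵐ[m] H := by
    set D := fun x => H x - Tker κ H x with hDdef
    have hDb : BddMeasurable D := hHb.sub hTHb
    have hD0 : ∫ x, D x * D x ∂m = 0 := by
      have h2 : ∫ x, D x * D x ∂m
          = ∫ x, H x * D x ∂m - ∫ x, Tker κ H x * D x ∂m := by
        rw [← integral_sub ((hHb.mul hDb).integrable m) ((hTHb.mul hDb).integrable m)]
        exact integral_congr_ae (ae_of_all _ fun x => by simp only [hDdef]; ring)
      rw [h2, hkey1 D hDb, sub_self]
    have := (integral_eq_zero_iff_of_nonneg (fun x => mul_self_nonneg (D x))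
      ((hDb.mul hDb).integrable m)).mp hD0
    filter_upwards [this] with x hx
    have h3 := mul_self_eq_zero.mp hx
    simp only [hDdef] at h3
    linarith
  -- expansion
  have hH2b : BddMeasurable (fun x => H x * H x) := hHb.mul hHb
  have hexp : ∀ (x : X) (c : ℝ), ∫ y, (H y - c) * (H y - c) ∂(κ x)
      = Tker κ (fun y => H y * H y) x - 2 * c * Tker κ H x
        + c * c * (κ x Set.univ).toReal := by
    intro x c
    have i2 : Integrable (fun y => H y * H y) (κ x) := hH2b.integrable _
    have i1 : Integrable (fun y => (2*c) * H y) (κ x) := (hHb.integrable _).const_mul _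
    have isub : Integrable (fun y => H y * H y - (2*c) * H y) (κ x) := i2.sub i1
    calc ∫ y, (H y - c) * (H y - c) ∂(κ x)
        = ∫ y, ((H y * H y - (2*c) * H y) + c * c) ∂(κ x) :=
          integral_congr_ae (ae_of_all _ fun y => by ring)
      _ = (∫ y, (H y * H y - (2*c) * H y) ∂(κ x)) + ∫ _, c * c ∂(κ x) :=
          integral_add isub (integrable_const _)
      _ = ((∫ y, H y * H y ∂(κ x)) - ∫ y, (2*c) * H y ∂(κ x)) + ∫ _, c * c ∂(κ x) := by
          rw [integral_sub i2 i1]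
      _ = Tker κ (fun y => H y * H y) x - 2 * c * Tker κ H x
            + c * c * (κ x Set.univ).toReal := by
          rw [integral_const_mul, integral_const, smul_eq_mul]
          simp only [Tker, Measure.real]; ring
  -- pointwise Cauchy-Schwarz-type inequality
  have hptwise : ∀ x, Tker κ H x * Tker κ H x ≤ Tker κ (fun y => H y * H y) x := by
    intro x
    have h0 : 0 ≤ ∫ y, (H y - Tker κ H x) * (H y - Tker κ H x) ∂(κ x) :=
      integral_nonneg fun y => mul_self_nonneg _
    rw [hexp x (Tker κ H x)] at h0
    nlinarith [mul_self_nonneg (Tker κ H x), hT1le x,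
      ENNReal.toReal_nonneg (a := κ x Set.univ)]
  -- T(H²) = H² a.e.
  have hTH2b := bddMeasurable_Tker κ hκ hH2b
  have hdiff_nonneg : ∀ᵐ x ∂m, 0 ≤ Tker κ (fun y => H y * H y) x - H x * H x := by
    filter_upwards [hTH] with x hx
    have := hptwise x
    rw [hx] at this
    linarith
  have hint_diff : ∫ x, (Tker κ (fun y => H y * H y) x - H x * H x) ∂m = 0 := by
    rw [integral_sub (hTH2b.integrable m) (hH2b.integrable m), hmI _ hH2b, sub_self]
  have hTH2 : (fun x => Tker κ (fun y => H y * H y) x - H x * H x) =ᵐ[m] 0 :=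
    (integral_eq_zero_iff_of_nonneg_ae hdiff_nonneg
      ((hTH2b.sub hH2b).integrable m)).mp hint_diff
  -- a.e. constancy of H under κ x
  have hconst : ∀ᵐ x ∂m, H =ᵐ[κ x] fun _ => H x := by
    filter_upwards [hTH, hTH2, hT1m] with x h1 h2 h3
    simp only [Pi.zero_apply] at h2
    have h0 : ∫ y, (H y - H x) * (H y - H x) ∂(κ x) = 0 := by
      rw [hexp x (H x), h1, h3]
      linarith
    have h4 := (integral_eq_zero_iff_of_nonneg (fun y => mul_self_nonneg _)
      (((hHb.sub (bddMeasurable_const (H x))).mul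
        (hHb.sub (bddMeasurable_const (H x)))).integrable (κ x))).mp h0
    filter_upwards [h4] with y hy
    have h5 := mul_self_eq_zero.mp hy
    linarith
  -- T(H·f) = H · T f a.e.
  have hmul : ∀ f : X → ℝ, BddMeasurable f →
      (fun x => Tker κ (fun y => H y * f y) x) =ᵐ[m] fun x => H x * Tker κ f x := by
    intro f hf
    filter_upwards [hconst] with x hx
    have e : ∫ y, H y * f y ∂(κ x) = ∫ y, H x * f y ∂(κ x) := by
      refine integral_congr_ae ?_
      filter_upwards [hx] with y hy
      rw [hy]
    simp only [Tker]
    rw [e, integral_const_mul]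
  -- reversibility of μ
  have hrev : IsReversibleMeas κ μ := by
    intro f g hf hg
    have hTf := bddMeasurable_Tker κ hκ hf
    have hTg := bddMeasurable_Tker κ hκ hg
    calc ∫ x, Tker κ f x * g x ∂μ
        = ∫ x, H x * (Tker κ f x * g x) ∂m := hint _ (hTf.mul hg)
      _ = ∫ x, Tker κ f x * (H x * g x) ∂m :=
          integral_congr_ae (ae_of_all _ fun x => by ring)
      _ = ∫ x, f x * Tker κ (fun y => H y * g y) x ∂m := hmR f _ hf (hHb.mul hg)
      _ = ∫ x, f x * (H x * Tker κ g x) ∂m := by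
          refine integral_congr_ae ?_
          filter_upwards [hmul g hg] with x hx
          rw [hx]
      _ = ∫ x, H x * (f x * Tker κ g x) ∂m :=
          integral_congr_ae (ae_of_all _ fun x => by ring)
      _ = ∫ x, f x * Tker κ g x ∂μ := (hint _ (hf.mul hTg)).symm
  exact ⟨hcons, hrev⟩

/-- Lemma 10: every extreme element of the set `𝒢` of conservative reversible
probability measures is an extreme element of the set `ℐ` of invariant probability
measures. -/
theorem extreme_conservative_reversible_is_extreme_invariant
    (κ : Kernel X X) (hκ : ∀ x, κ x Set.univ ≤ 1) (m : Measure X)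
    (hm : IsExtremeElem
      {μ : Measure X | IsProbabilityMeasure μ ∧ IsConservativeMeas κ μ ∧
        IsReversibleMeas κ μ} m) :
    IsExtremeElem {μ : Measure X | IsProbabilityMeasure μ ∧ IsInvariantMeas κ μ} m := by
  obtain ⟨hmG, hmExt⟩ := hm
  obtain ⟨hmP, hmC, hmR⟩ := hmG
  haveI : IsFiniteKernel κ := ⟨⟨1, ENNReal.one_lt_top, hκ⟩⟩
  haveI := hmP
  have hmI : IsInvariantMeas κ m := invariant_of_cons_rev κ hκ m hmC hmR
  refine ⟨⟨hmP, hmI⟩, ?_⟩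
  intro t ht m₀ m₁ hm₀ hm₁ heq
  obtain ⟨h0P, h0I⟩ := hm₀
  obtain ⟨h1P, h1I⟩ := hm₁
  haveI := h0P; haveI := h1P
  have hle0 : ENNReal.ofReal (1 - t) • m₀ ≤ m := by
    rw [heq]
    exact Measure.le_iff'.mpr fun A => le_add_right le_rfl
  have hle1 : ENNReal.ofReal t • m₁ ≤ m := by
    rw [heq]
    exact Measure.le_iff'.mpr fun A => le_add_left le_rfl
  have h0G := mem_G_of_invariant κ hκ m m₀ hmC hmR h0I
    (show (0:ℝ) < 1 - t by linarith [ht.2]) hle0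
  have h1G := mem_G_of_invariant κ hκ m m₁ hmC hmR h1I ht.1 hle1
  exact hmExt t ht m₀ m₁ ⟨h0P, h0G.1, h0G.2⟩ ⟨h1P, h1G.1, h1G.2⟩ heq
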